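/- Let E be a real Banach space and let K be a convex subset of E* that is compact and metrizable in the weak* topology. Then the weak* exposed points of K are weak* dense in the affine exposed points of K, which are weak* dense in the extreme points of K; that is, AExp(K) is contained in the weak* closure of w*Exp(K), and Ext(K) is contained in the weak* closure of AExp(K). -/

import Mathlib

open Set

section Aux

variable {X : Type*} [AddCommGroup X] [Module ℝ X] [TopologicalSpace X]
  [IsTopologicalAddGroup X] [ContinuousSMul ℝ X]

private lemma aux_isCompact_convexJoin {A B : Set X} (hA : IsCompact A) (hB : IsCompact B) :
    IsCompact (convexJoin ℝ A B) := by
  have h : convexJoin ℝ A B =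
      (fun q : ℝ × X × X => (1 - q.1) • q.2.1 + q.1 • q.2.2) '' (Set.Icc (0:ℝ) 1 ×ˢ A ×ˢ B) := by
    ext x
    simp only [mem_convexJoin, Set.mem_image, Set.mem_prod, Set.mem_Icc]
    constructor
    · rintro ⟨a, ha, b, hb, hx⟩
      rw [segment_eq_image] at hx
      obtain ⟨θ, hθ, hx⟩ := hx
      exact ⟨(θ, a, b), ⟨hθ, ha, hb⟩, hx⟩
    · rintro ⟨⟨θ, a, b⟩, ⟨hθ, ha, hb⟩, hx⟩
      refine ⟨a, ha, b, hb, ?_⟩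
      rw [segment_eq_image]
      exact ⟨θ, hθ, hx⟩
  rw [h]
  refine (isCompact_Icc.prod (hA.prod hB)).image ?_
  exact ((continuous_const.sub continuous_fst).smul
    (continuous_fst.comp continuous_snd)).add
    (continuous_fst.smul ((continuous_snd.comp continuous_snd)))

private lemma aux_isCompact_convexHull_biUnion {ι : Type*} (t : Finset ι) (C : ι → Set X) :
    (∀ i ∈ t, IsCompact (C i)) → (∀ i ∈ t, Convex ℝ (C i)) → (∀ i ∈ t, (C i).Nonempty) →
    IsCompact (convexHull ℝ (⋃ i ∈ t, C i)) := by
  classical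
  induction t using Finset.induction_on with
  | empty => intro _ _ _; simp
  | @insert a s ha ih =>
    intro h1 h2 h3
    rw [Finset.set_biUnion_insert]
    rcases s.eq_empty_or_nonempty with rfl | hs
    · simp only [Finset.notMem_empty, Set.iUnion_of_empty, iUnion_empty, Set.union_empty]
      rw [(h2 a (Finset.mem_insert_self a ∅)).convexHull_eq]
      exact h1 a (Finset.mem_insert_self a ∅)
    · have hane : (C a).Nonempty := h3 a (Finset.mem_insert_self a s)
      obtain ⟨j, hj⟩ := hs
      have hUne : (⋃ i ∈ s, C i).Nonempty := by
        obtain ⟨c, hc⟩ := h3 j (Finset.mem_insert_of_mem hj)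
        exact ⟨c, Set.mem_biUnion hj hc⟩
      rw [convexHull_union hane hUne, (h2 a (Finset.mem_insert_self a s)).convexHull_eq]
      exact aux_isCompact_convexJoin (h1 a (Finset.mem_insert_self a s))
        (ih (fun i hi => h1 i (Finset.mem_insert_of_mem hi))
            (fun i hi => h2 i (Finset.mem_insert_of_mem hi))
            (fun i hi => h3 i (Finset.mem_insert_of_mem hi)))

end Aux

set_option maxHeartbeats 4000000 in
/-- Let `E` be a real Banach space and `K` a convex, weak* compact, weak* metrizable subset
of `E*`. Then the weak* exposed points of `K` are weak* dense in its affine exposed points,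
which are weak* dense in its extreme points. -/
theorem stmt_12 {E : Type*} [NormedAddCommGroup E] [NormedSpace ℝ E] [CompleteSpace E]
    (K : Set (WeakDual ℝ E)) (hconv : Convex ℝ K) (hcomp : IsCompact K)
    (hmetr : TopologicalSpace.MetrizableSpace K)
    (wExp AExp : Set (WeakDual ℝ E))
    (hwExp : wExp = {p ∈ K | ∃ x : E, ∀ q ∈ K, q ≠ p → q x < p x})
    (hAExp : AExp = {p : WeakDual ℝ E | ∃ hp : p ∈ K, ∃ τ : K → ℝ, Continuous τ ∧
      (∀ (a b : WeakDual ℝ E) (ha : a ∈ K) (hb : b ∈ K) (l : ℝ), 0 ≤ l → l ≤ 1 →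
        ∀ hm : l • a + (1 - l) • b ∈ K,
          τ ⟨l • a + (1 - l) • b, hm⟩ = l * τ ⟨a, ha⟩ + (1 - l) * τ ⟨b, hb⟩) ∧
      (∀ q : WeakDual ℝ E, ∀ hq : q ∈ K, q ≠ p → τ ⟨q, hq⟩ < τ ⟨p, hp⟩)}) :
    AExp ⊆ closure wExp ∧ Set.extremePoints ℝ K ⊆ closure AExp := by
  classical
  -- weak* exposed points are affinely exposed
  have hwA : wExp ⊆ AExp := by
    rw [hwExp, hAExp]
    rintro p ⟨hp, x, hx⟩
    refine ⟨hp, fun q => q.1 x, ?_, ?_, ?_⟩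
    · exact (WeakDual.eval_continuous x).comp continuous_subtype_val
    · intro a b ha hb l _ _ hm
      show (l • a + (1 - l) • b) x = l * a x + (1 - l) * b x
      rfl
    · intro q hq hqp
      exact hx q hq hqp
  -- affinely exposed points are extreme
  have hAE : AExp ⊆ Set.extremePoints ℝ K := by
    rw [hAExp]
    rintro p ⟨hp, τ, _, hτaff, hτexp⟩
    rw [mem_extremePoints]
    refine ⟨hp, fun x₁ hx₁ x₂ hx₂ hseg => ?_⟩
    obtain ⟨a, b, ha, hb, hab, hcombo⟩ := hseg
    have hb' : b = 1 - a := by linarith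
    subst hb'
    have hm : a • x₁ + (1 - a) • x₂ ∈ K := hcombo ▸ hp
    have heq : τ ⟨a • x₁ + (1 - a) • x₂, hm⟩ = a * τ ⟨x₁, hx₁⟩ + (1 - a) * τ ⟨x₂, hx₂⟩ :=
      hτaff x₁ x₂ hx₁ hx₂ a ha.le (by linarith) hm
    have hpe : (⟨a • x₁ + (1 - a) • x₂, hm⟩ : K) = ⟨p, hp⟩ := Subtype.ext hcombo
    rw [hpe] at heq
    have h1 : x₁ = p := by
      by_contra h
      have l1 := hτexp x₁ hx₁ h
      rcases eq_or_ne x₂ p with h2 | h2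
      · rw [show (⟨x₂, hx₂⟩ : K) = ⟨p, hp⟩ from Subtype.ext h2] at heq; nlinarith
      · have l2 := hτexp x₂ hx₂ h2; nlinarith
    have h2 : x₂ = p := by
      by_contra h
      have l2 := hτexp x₂ hx₂ h
      rcases eq_or_ne x₁ p with h1' | h1'
      · rw [show (⟨x₁, hx₁⟩ : K) = ⟨p, hp⟩ from Subtype.ext h1'] at heq; nlinarith
      · have l1 := hτexp x₁ hx₁ h1'; nlinarith
    exact ⟨h1, h2⟩
  -- main density result: extreme points are in the closure of the weak* exposed points
  have hmain : Set.extremePoints ℝ K ⊆ closure wExp := by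
    intro e he
    have heK : e ∈ K := he.1
    have hne : K.Nonempty := ⟨e, heK⟩
    haveI : CompactSpace K := isCompact_iff_compactSpace.mp hcomp
    letI := TopologicalSpace.metrizableSpaceMetric K
    -- a countable family of elements of E separating the points of K
    obtain ⟨T, hTc, hT⟩ := TopologicalSpace.isOpen_iUnion_countable
      (fun x : E => {pq : K × K | pq.1.1 x ≠ pq.2.1 x})
      (fun x => by
        have hcont : Continuous fun pq : K × K => (pq.1.1 x, pq.2.1 x) :=
          ((WeakDual.eval_continuous x).comp (continuous_subtype_val.comp continuous_fst)).prodMk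
            ((WeakDual.eval_continuous x).comp (continuous_subtype_val.comp continuous_snd))
        have hrw : {pq : K × K | pq.1.1 x ≠ pq.2.1 x} =
            (fun pq : K × K => (pq.1.1 x, pq.2.1 x)) ⁻¹' {y : ℝ × ℝ | y.1 = y.2}ᶜ := rfl
        show IsOpen {pq : K × K | pq.1.1 x ≠ pq.2.1 x}
        rw [hrw]
        exact ((isClosed_eq continuous_fst continuous_snd).isOpen_compl).preimage hcont)
    obtain ⟨f, hf⟩ := (hTc.insert 0).exists_eq_range (Set.insert_nonempty 0 T)
    have hfsep : ∀ p ∈ K, ∀ q ∈ K, (∀ n : ℕ, p (f n) = q (f n)) → p = q := by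
      intro p hp q hq hall
      by_contra hpq
      have hmem : (⟨⟨p, hp⟩, ⟨q, hq⟩⟩ : K × K) ∈ ⋃ x : E, {pq : K × K | pq.1.1 x ≠ pq.2.1 x} := by
        have : ∃ x : E, p x ≠ q x := by
          by_contra hno
          push_neg at hno
          exact hpq (DFunLike.ext p q hno)
        obtain ⟨x, hx⟩ := this
        exact Set.mem_iUnion.2 ⟨x, hx⟩
      rw [← hT] at hmem
      obtain ⟨x, hxmem⟩ := Set.mem_iUnion.1 hmem
      obtain ⟨hxT, hx⟩ := Set.mem_iUnion.1 hxmem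
      have hxr : x ∈ Set.range f := by rw [← hf]; exact Set.mem_insert_of_mem _ hxT
      obtain ⟨n, rfl⟩ := hxr
      exact hx (hall n)
    -- bounds on K
    have hMex : ∀ n : ℕ, ∃ m : ℝ, 0 ≤ m ∧ ∀ p ∈ K, |p (f n)| ≤ m := by
      intro n
      obtain ⟨p₀, hp₀, hmax⟩ := hcomp.exists_isMaxOn hne
        ((continuous_abs.comp (WeakDual.eval_continuous (f n))).continuousOn)
      exact ⟨|p₀ (f n)|, abs_nonneg _, fun p hp => hmax hp⟩
    choose M hM0 hMK using hMex
    -- rescaled separating sequence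
    set c : ℕ → ℝ := fun n => ((2:ℝ) ^ n)⁻¹ * (1 + ‖f n‖ + M n)⁻¹ with hcdef
    have hden : ∀ n, 0 < 1 + ‖f n‖ + M n := by
      intro n; have := norm_nonneg (f n); have := hM0 n; linarith
    have hcpos : ∀ n, 0 < c n := fun n =>
      mul_pos (inv_pos.2 (pow_pos two_pos n)) (inv_pos.2 (hden n))
    set y : ℕ → E := fun n => c n • f n with hydef
    have hynorm : ∀ n, ‖y n‖ ≤ ((2:ℝ) ^ n)⁻¹ := by
      intro n
      rw [hydef]
      simp only [norm_smul, Real.norm_eq_abs, abs_of_pos (hcpos n)]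
      rw [hcdef]
      have h1 : (1 + ‖f n‖ + M n)⁻¹ * ‖f n‖ ≤ 1 := by
        rw [inv_mul_le_iff₀ (hden n)]
        have := hM0 n; have := norm_nonneg (f n); linarith
      calc ((2:ℝ) ^ n)⁻¹ * (1 + ‖f n‖ + M n)⁻¹ * ‖f n‖
          = ((2:ℝ) ^ n)⁻¹ * ((1 + ‖f n‖ + M n)⁻¹ * ‖f n‖) := by ring
        _ ≤ ((2:ℝ) ^ n)⁻¹ * 1 := by
            exact mul_le_mul_of_nonneg_left h1 (le_of_lt (inv_pos.2 (pow_pos two_pos n)))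
        _ = ((2:ℝ) ^ n)⁻¹ := mul_one _
    have hyK : ∀ p ∈ K, ∀ n, |p (y n)| ≤ ((2:ℝ) ^ n)⁻¹ := by
      intro p hp n
      have heval : p (y n) = c n * p (f n) := by
        rw [hydef]; exact (map_smul p (c n) (f n))
      rw [heval, abs_mul, abs_of_pos (hcpos n), hcdef]
      have h1 : (1 + ‖f n‖ + M n)⁻¹ * |p (f n)| ≤ 1 := by
        rw [inv_mul_le_iff₀ (hden n)]
        have := hMK n p hp; have := norm_nonneg (f n); linarith
      calc ((2:ℝ) ^ n)⁻¹ * (1 + ‖f n‖ + M n)⁻¹ * |p (f n)|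
          = ((2:ℝ) ^ n)⁻¹ * ((1 + ‖f n‖ + M n)⁻¹ * |p (f n)|) := by ring
        _ ≤ ((2:ℝ) ^ n)⁻¹ * 1 := by
            exact mul_le_mul_of_nonneg_left h1 (le_of_lt (inv_pos.2 (pow_pos two_pos n)))
        _ = ((2:ℝ) ^ n)⁻¹ := mul_one _
    have hysep : ∀ p ∈ K, ∀ q ∈ K, (∀ n, p (y n) = q (y n)) → p = q := by
      intro p hp q hq hall
      refine hfsep p hp q hq (fun n => ?_)
      have h := hall n
      rw [hydef] at h
      simp only [map_smul, smul_eq_mul] at h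
      exact mul_left_cancel₀ (ne_of_gt (hcpos n)) h
    -- the quadratic form machinery
    set Bl : WeakDual ℝ E → WeakDual ℝ E → ℝ := fun u v => ∑' n, u (y n) * v (y n) with hBldef
    have hq4 : ∀ n : ℕ, ((2:ℝ) ^ n)⁻¹ * ((2:ℝ) ^ n)⁻¹ = (1/4 : ℝ)^n := by
      intro n
      rw [div_pow, one_pow, ← mul_inv, ← mul_pow]
      norm_num
    have hgeo : Summable (fun n : ℕ => ((2:ℝ) ^ n)⁻¹ * ((2:ℝ) ^ n)⁻¹) := by
      simp only [hq4]
      exact summable_geometric_of_lt_one (by norm_num) (by norm_num)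
    have hgeoval : ∑' n : ℕ, ((2:ℝ) ^ n)⁻¹ * ((2:ℝ) ^ n)⁻¹ = 4/3 := by
      simp only [hq4]
      rw [tsum_geometric_of_lt_one (by norm_num) (by norm_num)]
      norm_num
    have hbd : ∀ u : WeakDual ℝ E, ∃ C : ℝ, 0 ≤ C ∧ ∀ n, |u (y n)| ≤ C * ((2:ℝ) ^ n)⁻¹ := by
      intro u
      let u' : E →L[ℝ] ℝ := u
      refine ⟨‖u'‖, norm_nonneg _, fun n => ?_⟩
      calc |u (y n)| = ‖u' (y n)‖ := rfl
        _ ≤ ‖u'‖ * ‖y n‖ := u'.le_opNorm _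
        _ ≤ ‖u'‖ * ((2:ℝ) ^ n)⁻¹ := mul_le_mul_of_nonneg_left (hynorm n) (norm_nonneg _)
    have hSble : ∀ (C C' : ℝ) (g h : ℕ → ℝ), (∀ n, |g n| ≤ C * ((2:ℝ)^n)⁻¹) →
        (∀ n, |h n| ≤ C' * ((2:ℝ)^n)⁻¹) → Summable (fun n => g n * h n) := by
      intro C C' g h hg hh
      refine Summable.of_norm_bounded (g := fun n => (C * C') * (((2:ℝ)^n)⁻¹ * ((2:ℝ)^n)⁻¹))
        (hgeo.mul_left _) (fun n => ?_)
      have h1 : (0:ℝ) ≤ C * ((2:ℝ)^n)⁻¹ := le_trans (abs_nonneg _) (hg n)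
      calc ‖g n * h n‖ = |g n| * |h n| := by rw [Real.norm_eq_abs, abs_mul]
        _ ≤ (C * ((2:ℝ)^n)⁻¹) * (C' * ((2:ℝ)^n)⁻¹) :=
            mul_le_mul (hg n) (hh n) (abs_nonneg _) h1
        _ = (C * C') * (((2:ℝ)^n)⁻¹ * ((2:ℝ)^n)⁻¹) := by ring
    have hBsble : ∀ u v : WeakDual ℝ E, Summable (fun n => u (y n) * v (y n)) := by
      intro u v
      obtain ⟨C, _, hC⟩ := hbd u
      obtain ⟨C', _, hC'⟩ := hbd v
      exact hSble C C' _ _ hC hC'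
    -- basic algebraic identities for Bl
    have hBlsym : ∀ u v, Bl u v = Bl v u := by
      intro u v; exact tsum_congr (fun n => mul_comm _ _)
    have hBladd : ∀ u v w : WeakDual ℝ E, Bl (u + v) w = Bl u w + Bl v w := by
      intro u v w
      rw [hBldef]
      have h1 : (fun n => (u + v) (y n) * w (y n)) =
          fun n => u (y n) * w (y n) + v (y n) * w (y n) := by
        funext n
        show (u (y n) + v (y n)) * w (y n) = _
        ring
      simp only [h1]
      exact Summable.tsum_add (hBsble u w) (hBsble v w)
    have hBl0 : ∀ v, Bl 0 v = 0 := by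
      intro v
      rw [hBldef]
      have h1 : (fun n => (0 : WeakDual ℝ E) (y n) * v (y n)) = fun _ => (0:ℝ) := by
        funext n; show (0:ℝ) * v (y n) = 0; ring
      simp only [h1, tsum_zero]
    have hexp : ∀ (u v : WeakDual ℝ E) (t : ℝ),
        Bl (u + t • v) (u + t • v) =
          Bl u u + 2 * t * Bl u v + t^2 * Bl v v := by
      intro u v t
      rw [hBldef]
      have h1 : (fun n => (u + t • v) (y n) * (u + t • v) (y n)) =
          fun n => u (y n) * u (y n) +
            ((2*t) * (u (y n) * v (y n)) + t^2 * (v (y n) * v (y n))) := by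
        funext n
        show (u (y n) + t * v (y n)) * (u (y n) + t * v (y n)) = _
        ring
      simp only [h1]
      rw [Summable.tsum_add (hBsble u u) (((hBsble u v).mul_left _).add ((hBsble v v).mul_left _)),
        Summable.tsum_add ((hBsble u v).mul_left _) ((hBsble v v).mul_left _),
        tsum_mul_left, tsum_mul_left]
      ring
    have hBl_posK : ∀ p ∈ K, ∀ q ∈ K, p ≠ q → 0 < Bl (p - q) (p - q) := by
      intro p hp q hq hne'
      have hex : ∃ n, p (y n) ≠ q (y n) := by
        by_contra h; push_neg at h; exact hne' (hysep p hp q hq h)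
      obtain ⟨n, hn⟩ := hex
      refine Summable.tsum_pos (hBsble _ _) (fun i => mul_self_nonneg _) n ?_
      have hrw : (p - q) (y n) = p (y n) - q (y n) := rfl
      rw [hrw]
      exact mul_self_pos.2 (sub_ne_zero.2 hn)
    -- continuity of the quadratic distance on K
    have hcontK : ∀ z : WeakDual ℝ E, ContinuousOn (fun q => Bl (q - z) (q - z)) K := by
      intro z
      obtain ⟨C, hC0, hC⟩ := hbd z
      rw [continuousOn_iff_continuous_restrict]
      have : (Set.restrict K fun q => Bl (q - z) (q - z)) =
          fun q : K => ∑' n, (q.1 (y n) - z (y n)) * (q.1 (y n) - z (y n)) := rfl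
      show Continuous (fun q : K => ∑' n, (q.1 (y n) - z (y n)) * (q.1 (y n) - z (y n)))
      refine continuous_tsum (f := fun n (q : K) => (q.1 (y n) - z (y n)) * (q.1 (y n) - z (y n)))
        (fun n => ?_) (hgeo.mul_left ((1+C)*(1+C))) (fun n q => ?_)
      · have hev : Continuous fun q : K => q.1 (y n) :=
          (WeakDual.eval_continuous (y n)).comp continuous_subtype_val
        exact (hev.sub continuous_const).mul (hev.sub continuous_const)
      · have hb : |q.1 (y n) - z (y n)| ≤ (1+C) * ((2:ℝ)^n)⁻¹ := by
          calc |q.1 (y n) - z (y n)| ≤ |q.1 (y n)| + |z (y n)| := abs_sub _ _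
            _ ≤ ((2:ℝ)^n)⁻¹ + C * ((2:ℝ)^n)⁻¹ := add_le_add (hyK q.1 q.2 n) (hC n)
            _ = (1+C) * ((2:ℝ)^n)⁻¹ := by ring
        have h0 : (0:ℝ) ≤ (1+C) * ((2:ℝ)^n)⁻¹ := le_trans (abs_nonneg _) hb
        calc ‖(q.1 (y n) - z (y n)) * (q.1 (y n) - z (y n))‖
            = |q.1 (y n) - z (y n)| * |q.1 (y n) - z (y n)| := by
              rw [Real.norm_eq_abs, abs_mul]
          _ ≤ ((1+C) * ((2:ℝ)^n)⁻¹) * ((1+C) * ((2:ℝ)^n)⁻¹) :=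
              mul_le_mul hb hb (abs_nonneg _) h0
          _ = (1+C)*(1+C) * (((2:ℝ)^n)⁻¹ * ((2:ℝ)^n)⁻¹) := by ring
    -- the exposing vector associated to w
    have hvec : ∀ w : WeakDual ℝ E, ∃ x : E, ∀ q : WeakDual ℝ E, q x = Bl q w := by
      intro w
      obtain ⟨C, hC0, hC⟩ := hbd w
      have hsumE : Summable (fun n => w (y n) • y n) := by
        refine Summable.of_norm_bounded (g := fun n => C * (((2:ℝ)^n)⁻¹ * ((2:ℝ)^n)⁻¹))
          (hgeo.mul_left _) (fun n => ?_)
        rw [norm_smul, Real.norm_eq_abs]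
        calc |w (y n)| * ‖y n‖ ≤ (C * ((2:ℝ)^n)⁻¹) * ((2:ℝ)^n)⁻¹ :=
            mul_le_mul (hC n) (hynorm n) (norm_nonneg _)
              (le_trans (abs_nonneg _) (hC n))
          _ = C * (((2:ℝ)^n)⁻¹ * ((2:ℝ)^n)⁻¹) := by ring
      refine ⟨∑' n, w (y n) • y n, fun q => ?_⟩
      let q' : E →L[ℝ] ℝ := q
      calc q (∑' n, w (y n) • y n) = ∑' n, q' (w (y n) • y n) := q'.map_tsum hsumE
        _ = ∑' n, q (y n) * w (y n) := by
            refine tsum_congr (fun n => ?_)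
            show q' (w (y n) • y n) = q (y n) * w (y n)
            rw [q'.map_smul, smul_eq_mul]
            show w (y n) * q' (y n) = q (y n) * w (y n)
            exact mul_comm _ _
    -- now the main construction
    rw [mem_closure_iff]
    intro o ho hoe
    -- find z such that every point of K outside o is strictly closer to z than e is far
    obtain ⟨z, hzfar⟩ : ∃ z : WeakDual ℝ E,
        ∀ q ∈ K, q ∉ o → Bl (q - z) (q - z) < Bl (e - z) (e - z) := by
      rcases (K \ o).eq_empty_or_nonempty with hS | hS
      · refine ⟨e, fun q hq hqo => ?_⟩
        have : q ∈ K \ o := ⟨hq, hqo⟩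
        rw [hS] at this
        exact this.elim
      · set S := K \ o with hSdef
        have hScl : IsClosed S := by
          rw [hSdef, Set.diff_eq]
          exact hcomp.isClosed.inter (isClosed_compl_iff.2 ho)
        have hScp : IsCompact S := hcomp.of_isClosed_subset hScl Set.diff_subset
        set D := closedConvexHull ℝ S with hDdef
        have hDK : D ⊆ K := closedConvexHull_min Set.diff_subset hconv hcomp.isClosed
        have hDcv : Convex ℝ D := convex_closedConvexHull
        have hDcp : IsCompact D := hcomp.of_isClosed_subset isClosed_closedConvexHull hDK
        have hDne : D.Nonempty := hS.mono subset_closedConvexHull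
        -- Milman-type step: e is not in D
        have heD : e ∉ D := by
          intro heD
          obtain ⟨s₀, hs₀S, hs₀min⟩ := hScp.exists_isMinOn hS
            ((hcontK e).mono Set.diff_subset)
          set m := Bl (s₀ - e) (s₀ - e) with hmdef
          have hm0 : 0 < m := hBl_posK s₀ hs₀S.1 e heK (fun h => hs₀S.2 (h ▸ hoe))
          set ε := m/2 with hεdef
          have hε0 : 0 < ε := by rw [hεdef]; linarith
          -- cover S by small quadratic balls
          set S' : Set (↥K) := Subtype.val ⁻¹' S with hS'def
          have hS'cp : IsCompact S' := (hScl.preimage continuous_subtype_val).isCompact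
          have hcontsub : ∀ σ : WeakDual ℝ E,
              Continuous fun q : ↥K => Bl (q.1 - σ) (q.1 - σ) := fun σ =>
            continuousOn_iff_continuous_restrict.mp (hcontK σ)
          have hBl00 : ∀ σ : WeakDual ℝ E, Bl (σ - σ) (σ - σ) = 0 := by
            intro σ; rw [sub_self]; exact hBl0 0
          set O : ↥K → Set ↥K := fun σ => {q : ↥K | Bl (q.1 - σ.1) (q.1 - σ.1) < ε} with hOdef
          have hOopen : ∀ σ, IsOpen (O σ) := fun σ =>
            isOpen_lt (hcontsub σ.1) continuous_const
          have hScov : S' ⊆ ⋃ i : ↥S', O i.1 := by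
            intro q hq
            refine Set.mem_iUnion.2 ⟨⟨q, hq⟩, ?_⟩
            show Bl (q.1 - q.1) (q.1 - q.1) < ε
            rw [hBl00]; exact hε0
          obtain ⟨t, ht⟩ := hS'cp.elim_finite_subcover (fun i : ↥S' => O i.1)
            (fun i => hOopen i.1) hScov
          -- the closed quadratic balls in the ambient space
          set Cb : ↥K → Set (WeakDual ℝ E) :=
            fun σ => {q | q ∈ K ∧ Bl (q - σ.1) (q - σ.1) ≤ ε} with hCbdef
          have hCbK : ∀ σ, Cb σ ⊆ K := fun σ q hq => hq.1
          have hCbconv : ∀ σ, Convex ℝ (Cb σ) := by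
            intro σ
            intro q1 hq1 q2 hq2 a b ha hb hab
            refine ⟨hconv hq1.1 hq2.1 ha hb hab, ?_⟩
            have hpt : ∀ n, ((a • q1 + b • q2 - σ.1) (y n)) * ((a • q1 + b • q2 - σ.1) (y n)) ≤
                a * ((q1 - σ.1) (y n) * (q1 - σ.1) (y n)) +
                b * ((q2 - σ.1) (y n) * (q2 - σ.1) (y n)) := by
              intro n
              have h1 : (a • q1 + b • q2 - σ.1) (y n) =
                  a * (q1 (y n) - σ.1 (y n)) + b * (q2 (y n) - σ.1 (y n)) := by
                show a * q1 (y n) + b * q2 (y n) - σ.1 (y n) = _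
                have hab' : a + b = 1 := hab
                linear_combination σ.1 (y n) * hab'
              have h2 : (q1 - σ.1) (y n) = q1 (y n) - σ.1 (y n) := rfl
              have h3 : (q2 - σ.1) (y n) = q2 (y n) - σ.1 (y n) := rfl
              rw [h1, h2, h3]
              nlinarith [mul_self_nonneg ((q1 (y n) - σ.1 (y n)) - (q2 (y n) - σ.1 (y n))),
                mul_nonneg ha hb]
            have hsum1 : Summable fun n => a * ((q1 - σ.1) (y n) * (q1 - σ.1) (y n)) +
                b * ((q2 - σ.1) (y n) * (q2 - σ.1) (y n)) :=
              ((hBsble _ _).mul_left a).add ((hBsble _ _).mul_left b)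
            have hle : Bl (a • q1 + b • q2 - σ.1) (a • q1 + b • q2 - σ.1) ≤
                a * Bl (q1 - σ.1) (q1 - σ.1) + b * Bl (q2 - σ.1) (q2 - σ.1) := by
              have := Summable.tsum_le_tsum hpt (hBsble _ _) hsum1
              calc Bl (a • q1 + b • q2 - σ.1) (a • q1 + b • q2 - σ.1)
                  ≤ ∑' n, (a * ((q1 - σ.1) (y n) * (q1 - σ.1) (y n)) +
                    b * ((q2 - σ.1) (y n) * (q2 - σ.1) (y n))) := this
                _ = a * Bl (q1 - σ.1) (q1 - σ.1) + b * Bl (q2 - σ.1) (q2 - σ.1) := by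
                    rw [Summable.tsum_add ((hBsble _ _).mul_left a) ((hBsble _ _).mul_left b),
                      tsum_mul_left, tsum_mul_left]
            calc Bl (a • q1 + b • q2 - σ.1) (a • q1 + b • q2 - σ.1)
                ≤ a * Bl (q1 - σ.1) (q1 - σ.1) + b * Bl (q2 - σ.1) (q2 - σ.1) := hle
              _ ≤ a * ε + b * ε := by
                  have := hq1.2; have := hq2.2
                  have h1 := mul_le_mul_of_nonneg_left hq1.2 ha
                  have h2 := mul_le_mul_of_nonneg_left hq2.2 hb
                  linarith
              _ = ε := by rw [← add_mul, hab, one_mul]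
          have hCbcp : ∀ σ : ↥K, IsCompact (Cb σ) := by
            intro σ
            have hset : Cb σ = Subtype.val ''
                {q : ↥K | Bl (q.1 - σ.1) (q.1 - σ.1) ≤ ε} := by
              ext q
              simp only [hCbdef, Set.mem_image, Set.mem_setOf_eq]
              constructor
              · rintro ⟨hqK, hqb⟩; exact ⟨⟨q, hqK⟩, hqb, rfl⟩
              · rintro ⟨⟨q', hq'⟩, hqb, rfl⟩; exact ⟨hq', hqb⟩
            rw [hset]
            exact ((isClosed_le (hcontsub σ.1) continuous_const).isCompact).image
              continuous_subtype_val
          have hCbne : ∀ σ : ↥K, (Cb σ).Nonempty := by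
            intro σ
            refine ⟨σ.1, σ.2, ?_⟩
            rw [hBl00]
            exact le_of_lt hε0
          -- the compact convex hull of the finite union of balls
          set H := convexHull ℝ (⋃ i ∈ t, Cb i.1) with hHdef
          have hHcp : IsCompact H :=
            aux_isCompact_convexHull_biUnion t (fun i => Cb i.1)
              (fun i _ => hCbcp i.1) (fun i _ => hCbconv i.1) (fun i _ => hCbne i.1)
          have hHK : H ⊆ K :=
            convexHull_min (Set.iUnion₂_subset fun i _ => hCbK i.1) hconv
          have hSH : S ⊆ H := by
            intro s hs
            have hs' : (⟨s, Set.diff_subset hs⟩ : ↥K) ∈ S' := hs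
            have hsmem := ht hs'
            obtain ⟨i, hi⟩ := Set.mem_iUnion.1 hsmem
            obtain ⟨hit, hiO⟩ := Set.mem_iUnion.1 hi
            refine subset_convexHull ℝ _ (Set.mem_biUnion hit ?_)
            exact ⟨Set.diff_subset hs, le_of_lt hiO⟩
          have hDH : D ⊆ H := closedConvexHull_min hSH (convex_convexHull ℝ _) hHcp.isClosed
          have heH : e ∈ H := hDH heD
          have heExtH : e ∈ H.extremePoints ℝ :=
            inter_extremePoints_subset_extremePoints_of_subset hHK ⟨heH, he⟩
          have heUn : e ∈ ⋃ i ∈ t, Cb i.1 := extremePoints_convexHull_subset heExtH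
          obtain ⟨i, hi⟩ := Set.mem_iUnion.1 heUn
          obtain ⟨hit, hei⟩ := Set.mem_iUnion.1 hi
          have h1 : Bl (e - i.1.1) (e - i.1.1) ≤ ε := hei.2
          have h2 : m ≤ Bl (i.1.1 - e) (i.1.1 - e) := hs₀min i.2
          have h3 : Bl (i.1.1 - e) (i.1.1 - e) = Bl (e - i.1.1) (e - i.1.1) := by
            refine tsum_congr (fun n => ?_)
            have hr1 : (i.1.1 - e) (y n) = i.1.1 (y n) - e (y n) := rfl
            have hr2 : (e - i.1.1) (y n) = e (y n) - i.1.1 (y n) := rfl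
            rw [hr1, hr2]; ring
          rw [h3] at h2
          rw [hεdef] at h1
          linarith
        -- projection of e on D
        obtain ⟨p, hpD, hpmin⟩ := hDcp.exists_isMinOn hDne ((hcontK e).mono hDK)
        have hep : e ≠ p := fun h => heD (h ▸ hpD)
        set δ2 := Bl (p - e) (p - e) with hδ2def
        have hδ2 : 0 < δ2 := hBl_posK p (hDK hpD) e heK (fun h => hep h.symm)
        -- variational inequality
        have hvar : ∀ d ∈ D, 0 ≤ Bl (p - e) (d - p) := by
          intro d hd
          by_contra hneg
          push_neg at hneg
          set β := -Bl (p - e) (d - p) with hβdef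
          have hβ : 0 < β := by rw [hβdef]; linarith
          set Cd := Bl (d - p) (d - p) with hCddef
          have hCd : 0 ≤ Cd := tsum_nonneg (fun n => mul_self_nonneg _)
          set tt := min 1 (β / (Cd + 1)) with httdef
          have htt0 : 0 < tt := lt_min one_pos (div_pos hβ (by linarith))
          have htt1 : tt ≤ 1 := min_le_left _ _
          have httβ : tt ≤ β / (Cd + 1) := min_le_right _ _
          have hd' : (1 - tt) • p + tt • d ∈ D :=
            hDcv hpD hd (by linarith) (le_of_lt htt0) (by ring)
          have hrw : (1 - tt) • p + tt • d - e = (p - e) + tt • (d - p) := by module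
          have hged := hpmin hd'
          have hexp1 : Bl ((1 - tt) • p + tt • d - e) ((1 - tt) • p + tt • d - e) =
              δ2 + 2 * tt * Bl (p - e) (d - p) + tt^2 * Cd := by
            rw [hrw, hexp]
          have hged' : δ2 ≤ δ2 + 2 * tt * Bl (p - e) (d - p) + tt^2 * Cd := by
            rw [← hexp1]; exact hged
          have hkey : 2 * tt * β ≤ tt^2 * Cd := by
            have : Bl (p - e) (d - p) = -β := by rw [hβdef]; ring
            rw [this] at hged'
            nlinarith
          have h2β : 2 * β ≤ tt * Cd := by
            have := hkey
            nlinarith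
          have : tt * Cd ≤ β * (Cd / (Cd + 1)) := by
            have h1 : tt * Cd ≤ (β / (Cd + 1)) * Cd :=
              mul_le_mul_of_nonneg_right httβ hCd
            calc tt * Cd ≤ (β / (Cd + 1)) * Cd := h1
              _ = β * (Cd / (Cd + 1)) := by ring
          have hfrac : Cd / (Cd + 1) < 1 := by
            rw [div_lt_one (by linarith)]; linarith
          nlinarith
        -- the point z
        set s := 4 / δ2 with hsdef
        have hs0 : 0 < s := div_pos (by norm_num) hδ2
        refine ⟨e + s • (p - e), fun q hq hqo => ?_⟩
        have hqS : q ∈ D := subset_closedConvexHull ⟨hq, hqo⟩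
        -- rewrite q - z and e - z
        have hrwq : q - (e + s • (p - e)) = (q - e) + (-s) • (p - e) := by module
        have hrwe : e - (e + s • (p - e)) = (0 : WeakDual ℝ E) + (-s) • (p - e) := by module
        rw [hrwq, hrwe, hexp, hexp]
        have hBl0' : Bl 0 0 = 0 := hBl0 0
        have hBl0'' : Bl 0 (p - e) = 0 := hBl0 _
        rw [hBl0', hBl0'']
        -- bound Bl (q - e) (q - e) ≤ 6
        have hA6 : Bl (q - e) (q - e) ≤ 6 := by
          have hpt : ∀ n, (q - e) (y n) * (q - e) (y n) ≤
              4 * (((2:ℝ)^n)⁻¹ * ((2:ℝ)^n)⁻¹) := by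
            intro n
            have hr : (q - e) (y n) = q (y n) - e (y n) := rfl
            have h1 := hyK q hq n
            have h2 := hyK e heK n
            have habs : |(q - e) (y n)| ≤ 2 * ((2:ℝ)^n)⁻¹ := by
              rw [hr]
              calc |q (y n) - e (y n)| ≤ |q (y n)| + |e (y n)| := abs_sub _ _
                _ ≤ 2 * ((2:ℝ)^n)⁻¹ := by linarith
            have := abs_le.1 habs
            nlinarith [sq_nonneg ((q-e) (y n)), this.1, this.2,
              inv_pos.2 (pow_pos (two_pos (α := ℝ)) n)]
          calc Bl (q - e) (q - e)
              ≤ ∑' n, 4 * (((2:ℝ)^n)⁻¹ * ((2:ℝ)^n)⁻¹) :=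
                Summable.tsum_le_tsum hpt (hBsble _ _) (hgeo.mul_left _)
            _ = 4 * (4/3) := by rw [tsum_mul_left, hgeoval]
            _ ≤ 6 := by norm_num
        -- Bl (q - e) (p - e) ≥ δ2
        have hBge : δ2 ≤ Bl (q - e) (p - e) := by
          have hsplit : Bl (q - e) (p - e) = Bl (q - p) (p - e) + Bl (p - e) (p - e) := by
            have : q - e = (q - p) + (p - e) := by module
            rw [this, hBladd]
          have hv := hvar q hqS
          have hsym : Bl (q - p) (p - e) = Bl (p - e) (q - p) := hBlsym _ _
          rw [hsplit, hsym]
          linarith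
        -- conclude
        have hq2 : Bl (q - e) (q - e) + 2 * (-s) * Bl (q - e) (p - e) ≤ 6 - 2 * s * δ2 := by
          have h1 : 2 * (-s) * Bl (q - e) (p - e) ≤ 2 * (-s) * δ2 := by
            have := mul_le_mul_of_nonneg_left hBge (by linarith : (0:ℝ) ≤ 2 * s)
            nlinarith
          linarith
        have hsδ : 2 * s * δ2 = 8 := by
          have hδ2ne : δ2 ≠ 0 := ne_of_gt hδ2
          rw [hsdef]; field_simp; norm_num
        nlinarith
    -- maximize the distance to z over K
    obtain ⟨k, hkK, hkmax⟩ := hcomp.exists_isMaxOn hne (hcontK z)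
    have hko : k ∈ o := by
      by_contra hko
      have h1 := hzfar k hkK hko
      have h2 : Bl (e - z) (e - z) ≤ Bl (k - z) (k - z) := hkmax heK
      linarith
    obtain ⟨x, hx⟩ := hvec (k - z)
    refine ⟨k, hko, ?_⟩
    rw [hwExp]
    refine ⟨hkK, x, fun q hq hqk => ?_⟩
    have hFq : Bl (q - z) (q - z) ≤ Bl (k - z) (k - z) := hkmax hq
    have hqz : q - z = (k - z) + (1:ℝ) • (q - k) := by module
    rw [hqz, hexp] at hFq
    have hpos := hBl_posK q hq k hkK hqk
    have hkey : Bl (k - z) (q - k) ≤ -(1/2) * Bl (q - k) (q - k) := by nlinarith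
    have hdiff : Bl (q - k) (k - z) = Bl q (k - z) - Bl k (k - z) := by
      have : Bl ((q - k) + k) (k - z) = Bl (q - k) (k - z) + Bl k (k - z) := hBladd _ _ _
      rw [sub_add_cancel] at this
      linarith
    have hxq : q x = Bl q (k - z) := hx q
    have hxk : k x = Bl k (k - z) := hx k
    have hsym : Bl (q - k) (k - z) = Bl (k - z) (q - k) := hBlsym _ _
    rw [hxq, hxk]
    nlinarith
  refine ⟨fun p hp => hmain (hAE hp), fun p hp => ?_⟩
  exact closure_mono hwA (hmain hp)
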